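/- Let f : ℝ₊ → ℝ₊ be a function with f(0) = 0 and define ψ : ℝ × ℝ → ℝ by ψ(x,t) := sign(x − t)·f(|x − t|). Assume f(z) > 0 for all z > 0 (so ψ is a T₁-function with ϑ₁(x) = x). Then ψ is a Tₙ^{λ}-function for every n ∈ ℕ and every λ ∈ Λₙ if and only if f is strictly increasing on ℝ₊. -/

import Mathlib

open Set

private lemma gval_lt (f : ℝ → ℝ) (x t : ℝ) (h : t < x) :
    Real.sign (x - t) * f |x - t| = f (x - t) := by
  rw [Real.sign_of_pos (by linarith), abs_of_pos (by linarith), one_mul]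

private lemma gval_gt (f : ℝ → ℝ) (x t : ℝ) (h : x < t) :
    Real.sign (x - t) * f |x - t| = -f (t - x) := by
  rw [Real.sign_of_neg (by linarith), abs_of_neg (by linarith), neg_sub]
  ring

private lemma psi_anti (f : ℝ → ℝ) (hf0 : f 0 = 0)
    (hpos : ∀ z : ℝ, 0 < z → 0 < f z)
    (hmono : StrictMonoOn f (Set.Ici 0)) (x : ℝ) :
    StrictAnti (fun t => Real.sign (x - t) * f |x - t|) := by
  intro t₁ t₂ h
  simp only
  rcases lt_trichotomy t₂ x with h2 | h2 | h2
  · rw [gval_lt f x t₁ (by linarith), gval_lt f x t₂ h2]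
    exact hmono (by simp; linarith) (by simp; linarith) (by linarith)
  · subst h2
    rw [gval_lt f t₂ t₁ h]
    simp [hf0, hpos _ (by linarith : (0:ℝ) < t₂ - t₁)]
  · rw [gval_gt f x t₂ h2]
    rcases lt_trichotomy t₁ x with h1 | h1 | h1
    · rw [gval_lt f x t₁ h1]
      have := hpos _ (by linarith : (0:ℝ) < t₂ - x)
      have := hpos _ (by linarith : (0:ℝ) < x - t₁)
      linarith
    · subst h1
      simp [hf0]
      exact hpos _ (by linarith)
    · rw [gval_gt f x t₁ h1]
      have := hmono (by simp; linarith : t₁ - x ∈ Set.Ici (0:ℝ))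
        (by simp; linarith : t₂ - x ∈ Set.Ici (0:ℝ)) (by linarith)
      linarith

theorem stmt18 (f : ℝ → ℝ) (hf0 : f 0 = 0)
    (hnn : ∀ z : ℝ, 0 ≤ z → 0 ≤ f z) (hpos : ∀ z : ℝ, 0 < z → 0 < f z)
    (ψ : ℝ → ℝ → ℝ) (hψ : ∀ x t : ℝ, ψ x t = Real.sign (x - t) * f |x - t|) :
    (∀ n : ℕ, 1 ≤ n → ∀ x : Fin n → ℝ, ∀ c : Fin n → ℝ, (∀ i, 0 ≤ c i) → c ≠ 0 →
        ∃ ϑ : ℝ, (∀ t, t < ϑ → 0 < ∑ i, c i * ψ (x i) t) ∧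
                 (∀ t, ϑ < t → ∑ i, c i * ψ (x i) t < 0)) ↔
      StrictMonoOn f (Set.Ici 0) := by
  constructor
  · -- forward: property implies strict monotonicity
    intro h a ha b hb hab
    by_contra hle
    push_neg at hle
    have hb0 : 0 < b := lt_of_le_of_lt ha hab
    have hfb : 0 < f b := hpos b hb0
    have ha0 : 0 < a := by
      rcases lt_or_eq_of_le (Set.mem_Ici.mp ha) with h' | h'
      · exact h'
      · exfalso; rw [← h', hf0] at hle; linarith
    obtain ⟨ϑ, h1, h2⟩ := h 2 (by norm_num) ![0, a + b] ![1, 1]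
      (by intro i; fin_cases i <;> norm_num)
      (by
        intro hc
        have := congrFun hc 0
        norm_num at this)
    have hSa : ∑ i, ![(1:ℝ), 1] i * ψ (![0, a + b] i) a = f b - f a := by
      rw [Fin.sum_univ_two]
      simp only [Matrix.cons_val_zero, Matrix.cons_val_one, Matrix.head_cons, one_mul]
      rw [hψ, hψ, show (0:ℝ) - a = -a by ring, show a + b - a = b by ring,
        Real.sign_of_neg (by linarith), Real.sign_of_pos hb0, abs_neg,
        abs_of_pos ha0, abs_of_pos hb0]
      ring
    have hSb : ∑ i, ![(1:ℝ), 1] i * ψ (![0, a + b] i) b = f a - f b := by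
      rw [Fin.sum_univ_two]
      simp only [Matrix.cons_val_zero, Matrix.cons_val_one, Matrix.head_cons, one_mul]
      rw [hψ, hψ, show (0:ℝ) - b = -b by ring, show a + b - b = a by ring,
        Real.sign_of_neg (by linarith), Real.sign_of_pos ha0, abs_neg,
        abs_of_pos ha0, abs_of_pos hb0]
      ring
    have hθa : ϑ ≤ a := by
      by_contra h'
      push_neg at h'
      have := h1 a h'
      rw [hSa] at this
      linarith
    have hbθ : b ≤ ϑ := by
      by_contra h'
      push_neg at h'
      have := h2 b h'
      rw [hSb] at this
      linarith
    linarith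
  · -- reverse
    intro hmono n hn x c hc hcne
    haveI : Nonempty (Fin n) := ⟨⟨0, hn⟩⟩
    simp only [hψ]
    set S : ℝ → ℝ := fun t => ∑ i, c i * (Real.sign (x i - t) * f |x i - t|) with hS
    obtain ⟨j, hj⟩ : ∃ j, c j ≠ 0 := Function.ne_iff.mp hcne
    have hcj : 0 < c j := lt_of_le_of_ne (hc j) (Ne.symm hj)
    have hS_anti : StrictAnti S := by
      intro t₁ t₂ ht
      apply Finset.sum_lt_sum
      · intro i _
        exact mul_le_mul_of_nonneg_left
          (le_of_lt ((psi_anti f hf0 hpos hmono (x i)) ht)) (hc i)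
      · exact ⟨j, Finset.mem_univ j,
          mul_lt_mul_of_pos_left ((psi_anti f hf0 hpos hmono (x j)) ht) hcj⟩
    have hne : (Finset.univ : Finset (Fin n)).Nonempty := Finset.univ_nonempty
    set m : ℝ := Finset.univ.inf' hne x with hm
    set M : ℝ := Finset.univ.sup' hne x with hM
    have hpos_small : ∀ t, t < m → 0 < S t := by
      intro t ht
      apply Finset.sum_pos'
      · intro i _
        have hti : t < x i := lt_of_lt_of_le ht (Finset.inf'_le _ (Finset.mem_univ i))
        rw [gval_lt f (x i) t hti]
        exact mul_nonneg (hc i) (le_of_lt (hpos _ (by linarith)))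
      · refine ⟨j, Finset.mem_univ j, ?_⟩
        have htj : t < x j := lt_of_lt_of_le ht (Finset.inf'_le _ (Finset.mem_univ j))
        rw [gval_lt f (x j) t htj]
        exact mul_pos hcj (hpos _ (by linarith))
    have hneg_large : ∀ t, M < t → S t < 0 := by
      intro t ht
      have : 0 < ∑ i, -(c i * (Real.sign (x i - t) * f |x i - t|)) := by
        apply Finset.sum_pos'
        · intro i _
          have hti : x i < t := lt_of_le_of_lt (Finset.le_sup' _ (Finset.mem_univ i)) ht
          rw [gval_gt f (x i) t hti]
          have := mul_nonneg (hc i) (le_of_lt (hpos _ (by linarith : (0:ℝ) < t - x i)))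
          nlinarith [hc i, hpos _ (by linarith : (0:ℝ) < t - x i)]
        · refine ⟨j, Finset.mem_univ j, ?_⟩
          have htj : x j < t := lt_of_le_of_lt (Finset.le_sup' _ (Finset.mem_univ j)) ht
          rw [gval_gt f (x j) t htj]
          nlinarith [hpos _ (by linarith : (0:ℝ) < t - x j)]
      rw [Finset.sum_neg_distrib] at this
      simp only [hS]
      linarith
    set T : Set ℝ := {t | 0 < S t} with hT
    have hTne : T.Nonempty := ⟨m - 1, hpos_small _ (by linarith)⟩
    have hTbdd : BddAbove T := by
      refine ⟨M, fun t ht => ?_⟩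
      by_contra h'
      push_neg at h'
      have := hneg_large t h'
      exact absurd ht (by simp [hT]; linarith)
    refine ⟨sSup T, fun t ht => ?_, fun t ht => ?_⟩
    · obtain ⟨s, hs, hts⟩ := exists_lt_of_lt_csSup hTne ht
      have := hS_anti hts
      exact lt_trans hs this
    · set s : ℝ := (sSup T + t) / 2 with hs
      have h1 : sSup T < s := by simp [hs]; linarith
      have h2 : s < t := by simp [hs]; linarith
      have hSs : S s ≤ 0 := by
        by_contra h'
        push_neg at h'
        have : s ∈ T := h'
        have := le_csSup hTbdd this
        linarith
      have := hS_anti h2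
      linarith
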